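/- Let f : {0,1}ⁿ → ℝ, let X be uniformly distributed on {0,1}ⁿ, and let a, b be real numbers with b > a ≥ Mf (the median of f(X)). Define g_{a,b} : {0,1}ⁿ → ℝ by g_{a,b}(x) = b if f(x) ≥ b, g_{a,b}(x) = f(x) if a < f(x) < b, and g_{a,b}(x) = a if f(x) ≤ a. Then Var(g_{a,b}(X)) ≥ (P{f(X) ≥ b}/4)·(b − a)². -/

import Mathlib

open scoped Classical
open Finset

/-- Probability of an event under the uniform distribution on `{0,1}ⁿ`. -/
noncomputable def prb {n : ℕ} (P : (Fin n → Fin 2) → Prop) : ℝ :=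
  ((Finset.univ.filter P).card : ℝ) / 2 ^ n

/-- `x^{(i)}`: flip the `i`-th bit of `x`. -/
noncomputable def flipBit {n : ℕ} (x : Fin n → Fin 2) (i : Fin n) : Fin n → Fin 2 :=
  Function.update x i (x i + 1)

/-- The `α`-quantile `Q_α = inf { z : P{f(X) ≤ z} ≥ α }`. -/
noncomputable def quant {n : ℕ} (f : (Fin n → Fin 2) → ℝ) (α : ℝ) : ℝ :=
  sInf {z : ℝ | α ≤ prb fun x => f x ≤ z}

/-- Expectation of `f(X)` for `X` uniform on `{0,1}ⁿ`. -/
noncomputable def expecb {n : ℕ} (f : (Fin n → Fin 2) → ℝ) : ℝ :=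
  (∑ x, f x) / 2 ^ n

/-- Variance of `f(X)` for `X` uniform on `{0,1}ⁿ`. -/
noncomputable def varb {n : ℕ} (f : (Fin n → Fin 2) → ℝ) : ℝ :=
  expecb fun x => (f x - expecb f) ^ 2

lemma prb_mono {n : ℕ} {P Q : (Fin n → Fin 2) → Prop} (h : ∀ x, P x → Q x) :
    prb P ≤ prb Q := by
  unfold prb
  apply div_le_div_of_nonneg_right ?_ (by positivity)
  exact_mod_cast Finset.card_le_card (Finset.monotone_filter_right _ (fun x _ hx => h x hx))

lemma median_le {n : ℕ} (f : (Fin n → Fin 2) → ℝ) {a : ℝ} (ha : quant f (1/2) ≤ a) :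
    (1:ℝ)/2 ≤ prb fun x => f x ≤ a := by
  by_contra h
  push_neg at h
  set F := insert (a+1) ((Finset.univ.image f).filter (fun y => a < y)) with hF
  have hFne : F.Nonempty := ⟨a+1, mem_insert_self _ _⟩
  set t := F.min' hFne with ht
  have hta : a < t := by
    rw [ht, Finset.lt_min'_iff]
    intro y hy
    rcases Finset.mem_insert.1 hy with rfl | hy
    · linarith
    · exact (Finset.mem_filter.1 hy).2
  have hSne : {z : ℝ | (1:ℝ)/2 ≤ prb fun x => f x ≤ z}.Nonempty := by
    have hne : (Finset.univ.image f).Nonempty := by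
      simp [Finset.univ_nonempty]
    refine ⟨(Finset.univ.image f).max' hne, ?_⟩
    have heq : (Finset.univ.filter fun x => f x ≤ (Finset.univ.image f).max' hne)
        = Finset.univ := by
      apply Finset.filter_true_of_mem
      intro x _
      exact Finset.le_max' _ _ (Finset.mem_image_of_mem f (Finset.mem_univ x))
    show (1:ℝ)/2 ≤ prb _
    rw [prb, heq]
    rw [Finset.card_univ]
    have : ((Fintype.card (Fin n → Fin 2) : ℝ)) = 2 ^ n := by
      simp [Fintype.card_fun]
    rw [this, div_self (by positivity)]
    norm_num
  have hts : t ≤ quant f (1/2) := by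
    apply le_csInf hSne
    intro z hz
    by_contra hzt
    push_neg at hzt
    have hsub : prb (fun x => f x ≤ z) ≤ prb fun x => f x ≤ a := by
      apply prb_mono
      intro x hx
      by_contra hxa
      push_neg at hxa
      have hmem : f x ∈ F := by
        rw [hF]
        exact Finset.mem_insert_of_mem (Finset.mem_filter.2
          ⟨Finset.mem_image_of_mem f (Finset.mem_univ x), hxa⟩)
      have := Finset.min'_le F _ hmem
      linarith
    have hz' : (1:ℝ)/2 ≤ prb fun x => f x ≤ z := hz
    linarith
  linarith

lemma prb_nonneg {n : ℕ} (P : (Fin n → Fin 2) → Prop) : 0 ≤ prb P := by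
  unfold prb; positivity

lemma varb_ge {n : ℕ} (g : (Fin n → Fin 2) → ℝ) (P : (Fin n → Fin 2) → Prop) (c : ℝ)
    (hc : 0 ≤ c) (h : ∀ x, P x → c ≤ (g x - expecb g) ^ 2) :
    prb P * c ≤ varb g := by
  unfold varb
  show _ ≤ expecb _
  unfold expecb prb
  rw [div_mul_eq_mul_div]
  apply div_le_div_of_nonneg_right ?_ (by positivity)
  calc ((Finset.univ.filter P).card : ℝ) * c
      = ∑ _x ∈ Finset.univ.filter P, c := by rw [Finset.sum_const, nsmul_eq_mul]
    _ ≤ ∑ x ∈ Finset.univ.filter P, (g x - expecb g) ^ 2 := by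
        apply Finset.sum_le_sum
        intro x hx
        exact h x (Finset.mem_filter.1 hx).2
    _ ≤ ∑ x, (g x - expecb g) ^ 2 := by
        apply Finset.sum_le_sum_of_subset_of_nonneg (Finset.filter_subset _ _)
        intro x _ _; positivity

theorem stmt_18 {n : ℕ} (f : (Fin n → Fin 2) → ℝ)
    (a b : ℝ) (hab : a < b) (ha : quant f (1 / 2) ≤ a)
    (g : (Fin n → Fin 2) → ℝ)
    (hg : ∀ x, g x = if b ≤ f x then b else if f x ≤ a then a else f x) :
    (prb fun x => b ≤ f x) / 4 * (b - a) ^ 2 ≤ varb g := by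
  set m := expecb g with hm
  have hq : (1:ℝ)/2 ≤ prb fun x => f x ≤ a := median_le f ha
  have hkey : (prb fun x => b ≤ f x) * ((b - a)/2)^2 ≤ varb g := by
    rcases le_total m ((a+b)/2) with hcase | hcase
    · apply varb_ge g _ _ (by positivity)
      intro x hx
      have hgx : g x = b := by rw [hg x, if_pos hx]
      rw [hgx]
      apply pow_le_pow_left₀ (by linarith)
      linarith
    · -- mean is large: use the set f ≤ a, which has measure ≥ 1/2 ≥ p
      have hp1 : (prb fun x => b ≤ f x) ≤ 1 - prb fun x => f x ≤ a := by
        have h1 : (prb fun x => b ≤ f x) + (prb fun x => f x ≤ a) ≤ 1 := by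
          unfold prb
          rw [← add_div, div_le_one (by positivity)]
          have hdisj : Disjoint (Finset.univ.filter fun x => b ≤ f x)
              (Finset.univ.filter fun x => f x ≤ a) := by
            rw [Finset.disjoint_left]
            intro x hx hy
            have h1 := (Finset.mem_filter.1 hx).2
            have h2 := (Finset.mem_filter.1 hy).2
            linarith
          have hle : ((Finset.univ.filter fun x => b ≤ f x) ∪
              (Finset.univ.filter fun x => f x ≤ a)).card ≤ (2:ℕ)^n := by
            calc _ ≤ (Finset.univ : Finset (Fin n → Fin 2)).card :=
                Finset.card_le_card (Finset.union_subset (Finset.filter_subset _ _)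
                  (Finset.filter_subset _ _))
              _ = 2^n := by simp [Fintype.card_fun]
          rw [Finset.card_union_of_disjoint hdisj] at hle
          exact_mod_cast hle
        linarith
      have hpq : (prb fun x => b ≤ f x) ≤ prb fun x => f x ≤ a := by linarith
      calc (prb fun x => b ≤ f x) * ((b - a)/2)^2
          ≤ (prb fun x => f x ≤ a) * ((b - a)/2)^2 := by
            apply mul_le_mul_of_nonneg_right hpq (by positivity)
        _ ≤ varb g := by
            apply varb_ge g _ _ (by positivity)
            intro x hx
            have hgx : g x = a := by
              rw [hg x, if_neg (by linarith), if_pos hx]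
            rw [hgx]
            have : (a - m)^2 = (m - a)^2 := by ring
            rw [this]
            apply pow_le_pow_left₀ (by linarith)
            linarith
  calc (prb fun x => b ≤ f x) / 4 * (b - a) ^ 2
      = (prb fun x => b ≤ f x) * ((b - a)/2)^2 := by ring
    _ ≤ varb g := hkey
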